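/- Let d ≥ 1, s ∈ (0, 1), and N > 0. For all ξ, η ∈ ℝ^d with ξ ≠ 0 and ‖η‖ ≤ ‖ξ‖/2, one has |m_{N,s}(ξ + η) − m_{N,s}(ξ)| ≤ 2(1 − s) ‖η‖ / ‖ξ‖. -/

import Mathlib

noncomputable section

open MeasureTheory Real Complex FourierTransform Filter Set ENNReal

/-- Euclidean space `ℝ^d`. -/
abbrev Rd (d : ℕ) : Type := EuclideanSpace ℝ (Fin d)

/-- The Fourier transform `𝓕f(ξ) = ∫ e^{-2πi x·ξ} f(x) dx`. -/
def FT {d : ℕ} (f : Rd d → ℂ) : Rd d → ℂ := FourierTransform.fourier f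

/-- The inverse Fourier transform. -/
def FTinv {d : ℕ} (f : Rd d → ℂ) : Rd d → ℂ := FourierTransformInv.fourierInv f

/-- Squared inhomogeneous Sobolev norm `‖f‖_{H^σ}² = ∫ (1+‖ξ‖²)^σ |g(ξ)|² dξ`, computed from
the frequency-side function `g = 𝓕f`. -/
def sobSq (d : ℕ) (σ : ℝ) (g : Rd d → ℂ) : ℝ≥0∞ :=
  ∫⁻ ξ : Rd d, ENNReal.ofReal ((1 + ‖ξ‖ ^ 2) ^ σ) * (‖g ξ‖₊ : ℝ≥0∞) ^ 2

/-- Squared homogeneous Sobolev norm `‖f‖_{Ḣ^σ}² = ∫ ‖ξ‖^{2σ} |g(ξ)|² dξ`, computed from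
the frequency-side function `g = 𝓕f`. -/
def dotSobSq (d : ℕ) (σ : ℝ) (g : Rd d → ℂ) : ℝ≥0∞ :=
  ∫⁻ ξ : Rd d, ENNReal.ofReal (‖ξ‖ ^ (2 * σ)) * (‖g ξ‖₊ : ℝ≥0∞) ^ 2

/-- The multiplier symbol `m_{N,s}` of the `I`-operator. -/
def mI (d : ℕ) (N s : ℝ) (ξ : Rd d) : ℝ := if ‖ξ‖ ≤ N then 1 else (N / ‖ξ‖) ^ (1 - s)

/-- The operator `I_N`, the Fourier multiplier with symbol `m_{N,s}`, realized as
`𝓕⁻(m_{N,s} · 𝓕 f)`. -/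
def IopN (d : ℕ) (N s : ℝ) (f : Rd d → ℂ) : Rd d → ℂ :=
  FTinv (fun ξ => (mI d N s ξ : ℂ) * FT f ξ)

/-- The symbol `e^{-4π² i t ‖ξ‖²}` of the free Schrödinger propagator `e^{itΔ}`. -/
def propag (d : ℕ) (t : ℝ) (ξ : Rd d) : ℂ :=
  Complex.exp (-((4 * Real.pi ^ 2 * t * ‖ξ‖ ^ 2 : ℝ) : ℂ) * Complex.I)

/-- The nonlinearity `|g|^{2k} g`. -/
def NLabs (k : ℕ) {d : ℕ} (g : Rd d → ℂ) (x : Rd d) : ℂ := (‖g x‖ : ℂ) ^ (2 * k) * g x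

/-- The energy `E_k(g) = (1/2)∫|∇g|² + (1/(2k+2))∫|g|^{2k+2}` (with `k = 1` this is the
cubic energy `E`). -/
def Energy (d k : ℕ) (g : Rd d → ℂ) : ℝ≥0∞ :=
  (1 / 2) * ∫⁻ x : Rd d, (‖fderiv ℝ g x‖₊ : ℝ≥0∞) ^ 2 +
    (1 / (2 * (k : ℝ≥0∞) + 2)) * ∫⁻ x : Rd d, (‖g x‖₊ : ℝ≥0∞) ^ (2 * k + 2)

/-- `g` is the (distributional) Fourier transform of `f`, expressed through the multiplication
formula `∫ f · 𝓕φ = ∫ g · φ` against all Schwartz functions `φ`. -/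
def IsFTPair (d : ℕ) (f g : Rd d → ℂ) : Prop :=
  ∀ φ : SchwartzMap (Rd d) ℂ, (∫ x : Rd d, f x * FT (⇑φ) x) = ∫ ξ : Rd d, g ξ * φ ξ

/-- `v : ℝ → (ℝ^d → ℂ)` is the frequency-side representation of a continuous `H²`-valued
Duhamel solution of `i∂_t u + Δ u = |u|^{2k} u` on `[a, b]`; the physical solution is
`u t = 𝓕⁻(v t)`. -/
def IsSolutionFreq (d k : ℕ) (a b : ℝ) (v : ℝ → Rd d → ℂ) : Prop :=
  (∀ t ∈ Set.Icc a b, AEStronglyMeasurable (v t) volume ∧ sobSq d 2 (v t) < ⊤) ∧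
  (∀ t₀ ∈ Set.Icc a b,
    Tendsto (fun t => sobSq d 2 (fun ξ => v t ξ - v t₀ ξ)) (nhdsWithin t₀ (Set.Icc a b)) (nhds 0)) ∧
  (∀ a' ∈ Set.Icc a b, ∀ t ∈ Set.Icc a b, ∀ᵐ ξ : Rd d ∂volume,
    v t ξ = propag d (t - a') ξ * v a' ξ -
      Complex.I * ∫ τ in a'..t, propag d (t - τ) ξ * FT (NLabs k (FTinv (v τ))) ξ)



lemma key_ineq (t x : ℝ) (ht0 : 0 ≤ t) (ht1 : t ≤ 1) (hx0 : 0 < x) (hx1 : x ≤ 1) :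
    1 - x ^ t ≤ t * (1 - x) / x := by
  have hv0 : (0:ℝ) < x ^ (1 - t) := Real.rpow_pos_of_pos hx0 _
  have hu0 : (0:ℝ) < x ^ t := Real.rpow_pos_of_pos hx0 _
  have hu1 : x ^ t ≤ 1 := Real.rpow_le_one hx0.le hx1 ht0
  have huv : x ^ t * x ^ (1 - t) = x := by
    rw [← Real.rpow_add hx0]; simp
  have hv : x ^ (1 - t) ≤ (1 - t) * x + t := by
    have h := Real.geom_mean_le_arith_mean2_weighted (sub_nonneg.2 ht1) ht0 hx0.le zero_le_one
      (by ring)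
    simpa using h
  rw [le_div_iff₀ hx0]
  nlinarith [mul_nonneg hv0.le (sq_nonneg (1 - x ^ t))]

lemma mdiff (s N a b : ℝ) (hs0 : 0 < s) (hs1 : s < 1) (hN : 0 < N) (hb : 0 < b) (hab : b ≤ a) :
    0 ≤ (if b ≤ N then (1:ℝ) else (N / b) ^ (1 - s)) -
        (if a ≤ N then (1:ℝ) else (N / a) ^ (1 - s)) ∧
      (if b ≤ N then (1:ℝ) else (N / b) ^ (1 - s)) -
        (if a ≤ N then (1:ℝ) else (N / a) ^ (1 - s)) ≤ (1 - s) * (a - b) / b := by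
  have ha : 0 < a := lt_of_lt_of_le hb hab
  have ht0 : (0:ℝ) ≤ 1 - s := by linarith
  have ht1 : (1:ℝ) - s ≤ 1 := by linarith
  by_cases haN : a ≤ N
  · have hbN : b ≤ N := le_trans hab haN
    rw [if_pos haN, if_pos hbN]
    constructor
    · simp
    · simp only [sub_self]
      exact div_nonneg (mul_nonneg ht0 (by linarith)) hb.le
  · push_neg at haN
    rw [if_neg (not_le.2 haN)]
    have hNa0 : 0 < N / a := div_pos hN ha
    have hNa1 : N / a ≤ 1 := (div_le_one ha).2 haN.le
    have hkey := key_ineq (1 - s) (N / a) ht0 ht1 hNa0 hNa1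
    by_cases hbN : b ≤ N
    · rw [if_pos hbN]
      constructor
      · have := Real.rpow_le_one hNa0.le hNa1 ht0
        linarith
      · calc 1 - (N / a) ^ (1 - s) ≤ (1 - s) * (1 - N / a) / (N / a) := hkey
          _ = (1 - s) * (a - N) / N := by field_simp
          _ ≤ (1 - s) * (a - b) / b := by
              rw [div_le_div_iff₀ hN hb]
              nlinarith [mul_nonneg (mul_nonneg ht0 ha.le) (sub_nonneg.2 hbN)]
    · push_neg at hbN
      rw [if_neg (not_le.2 hbN)]
      have hba0 : 0 < b / a := div_pos hb ha
      have hba1 : b / a ≤ 1 := (div_le_one ha).2 hab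
      have hsplit : (N / a) ^ (1 - s) = (N / b) ^ (1 - s) * (b / a) ^ (1 - s) := by
        rw [← Real.mul_rpow (by positivity) (by positivity)]
        congr 1
        field_simp
      have hNb1 : (N / b) ^ (1 - s) ≤ 1 :=
        Real.rpow_le_one (by positivity) ((div_le_one hb).2 hbN.le) ht0
      have hNb0 : 0 < (N / b) ^ (1 - s) := Real.rpow_pos_of_pos (div_pos hN hb) _
      have hba1' : (b / a) ^ (1 - s) ≤ 1 := Real.rpow_le_one hba0.le hba1 ht0
      have hkey2 := key_ineq (1 - s) (b / a) ht0 ht1 hba0 hba1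
      constructor
      · rw [hsplit]
        nlinarith
      · have heq : (1 - s) * (1 - b / a) / (b / a) = (1 - s) * (a - b) / b := by
          field_simp
        rw [hsplit]
        calc (N / b) ^ (1 - s) - (N / b) ^ (1 - s) * (b / a) ^ (1 - s)
            = (N / b) ^ (1 - s) * (1 - (b / a) ^ (1 - s)) := by ring
          _ ≤ 1 * (1 - (b / a) ^ (1 - s)) := by nlinarith
          _ = 1 - (b / a) ^ (1 - s) := one_mul _
          _ ≤ (1 - s) * (a - b) / b := by rw [← heq]; exact hkey2

/-- the Lipschitz-type bound
`|m_{N,s}(ξ+η) - m_{N,s}(ξ)| ≤ 2(1-s)‖η‖/‖ξ‖` for `‖η‖ ≤ ‖ξ‖/2`. -/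
theorem stmt13 (d : ℕ) (hd : 1 ≤ d) (s N : ℝ) (hs : s ∈ Set.Ioo (0 : ℝ) 1) (hN : 0 < N)
    (ξ η : Rd d) (hξ : ξ ≠ 0) (hη : ‖η‖ ≤ ‖ξ‖ / 2) :
    |mI d N s (ξ + η) - mI d N s ξ| ≤ 2 * (1 - s) * ‖η‖ / ‖ξ‖ := by
  obtain ⟨hs0, hs1⟩ := hs
  have ht0 : (0:ℝ) ≤ 1 - s := by linarith
  have hb : 0 < ‖ξ‖ := norm_pos_iff.mpr hξ
  have h1 : ‖ξ‖ ≤ ‖ξ + η‖ + ‖η‖ := by simpa using norm_add_le (ξ + η) (-η)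
  have h2 : ‖ξ + η‖ ≤ ‖ξ‖ + ‖η‖ := norm_add_le ξ η
  have ha0 : 0 < ‖ξ + η‖ := by linarith
  simp only [mI]
  rcases le_total ‖ξ‖ ‖ξ + η‖ with h | h
  · obtain ⟨hnn, hle⟩ := mdiff s N ‖ξ + η‖ ‖ξ‖ hs0 hs1 hN hb h
    rw [abs_sub_comm, _root_.abs_of_nonneg hnn]
    refine hle.trans ?_
    rw [div_le_div_iff₀ hb hb]
    nlinarith [mul_le_mul_of_nonneg_right
        (mul_le_mul_of_nonneg_left (show ‖ξ + η‖ - ‖ξ‖ ≤ ‖η‖ by linarith) ht0) hb.le,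
      mul_nonneg (mul_nonneg ht0 (norm_nonneg η)) hb.le]
  · obtain ⟨hnn, hle⟩ := mdiff s N ‖ξ‖ ‖ξ + η‖ hs0 hs1 hN ha0 h
    rw [_root_.abs_of_nonneg hnn]
    refine hle.trans ?_
    rw [div_le_div_iff₀ ha0 hb]
    nlinarith [mul_le_mul_of_nonneg_right
        (mul_le_mul_of_nonneg_left (show ‖ξ‖ - ‖ξ + η‖ ≤ ‖η‖ by linarith) ht0) hb.le,
      mul_le_mul_of_nonneg_left (show ‖ξ‖ ≤ 2 * ‖ξ + η‖ by linarith)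
        (mul_nonneg ht0 (norm_nonneg η))]
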